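/- For every real x ≥ √2, F₃(x) ≥ exp(−1/x²). -/

import Mathlib

/-- `F₃(x) = 1 − 2∑_{n=1}^∞ (4n²x² − 1)exp(−2n²x²)`, the cdf of the maximum of a
Brownian excursion. -/
noncomputable def F₃ (x : ℝ) : ℝ :=
  1 - 2 * ∑' n : ℕ, (4 * ((n : ℝ) + 1) ^ 2 * x ^ 2 - 1) *
      Real.exp (-(2 * ((n : ℝ) + 1) ^ 2 * x ^ 2))

lemma term_bound (t : ℝ) (ht : 2 ≤ t) (n : ℕ) :
    (4 * ((n : ℝ) + 1) ^ 2 * t - 1) * Real.exp (-(2 * ((n : ℝ) + 1) ^ 2 * t))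
      ≤ 16 / t * (Real.exp (-4) * Real.exp (-6) ^ n) := by
  set m : ℝ := (n : ℝ) + 1 with hmdef
  have hn0 : (0:ℝ) ≤ (n : ℝ) := Nat.cast_nonneg n
  have hm : 1 ≤ m := by simp only [hmdef]; linarith
  have htpos : (0:ℝ) < t := by linarith
  have h1 : (4 * m ^ 2 * t - 1) * Real.exp (-(2 * m ^ 2 * t))
      ≤ 4 * m ^ 2 * t * Real.exp (-(2 * m ^ 2 * t)) :=
    mul_le_mul_of_nonneg_right (by linarith) (Real.exp_nonneg _)
  -- L1 : t^2 ≤ 4 * exp (2 m² (t-2))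
  have hL1 : t ^ 2 ≤ 4 * Real.exp (2 * m ^ 2 * (t - 2)) := by
    have e0 : t - 1 ≤ Real.exp (t - 2) := by
      have := Real.add_one_le_exp (t - 2); linarith
    have e1 : (t - 1) ^ 2 ≤ Real.exp (t - 2) ^ 2 := by
      nlinarith [Real.exp_pos (t - 2)]
    have e2 : Real.exp (t - 2) ^ 2 = Real.exp (2 * (t - 2)) := by
      rw [sq, ← Real.exp_add]; ring_nf
    have e3 : Real.exp (2 * (t - 2)) ≤ Real.exp (2 * m ^ 2 * (t - 2)) := by
      apply Real.exp_le_exp.mpr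
      nlinarith [mul_nonneg (by nlinarith : (0:ℝ) ≤ m ^ 2 - 1) (by linarith : (0:ℝ) ≤ t - 2)]
    nlinarith
  have hsplit : Real.exp (-(2 * m ^ 2 * t))
      = Real.exp (-(2 * m ^ 2 * (t - 2))) * Real.exp (-(4 * m ^ 2)) := by
    rw [← Real.exp_add]; ring_nf
  have hb : t ^ 2 * Real.exp (-(2 * m ^ 2 * (t - 2))) ≤ 4 := by
    rw [Real.exp_neg]
    calc t ^ 2 * (Real.exp (2 * m ^ 2 * (t - 2)))⁻¹
        ≤ (4 * Real.exp (2 * m ^ 2 * (t - 2))) * (Real.exp (2 * m ^ 2 * (t - 2)))⁻¹ := by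
          apply mul_le_mul_of_nonneg_right hL1
          positivity
      _ = 4 := by
          field_simp
  have h2 : 4 * m ^ 2 * t * Real.exp (-(2 * m ^ 2 * t))
      ≤ 16 / t * (m ^ 2 * Real.exp (-(4 * m ^ 2))) := by
    have keyeq : 4 * m ^ 2 * t * Real.exp (-(2 * m ^ 2 * t))
        = (4 * m ^ 2 / t) * (t ^ 2 * Real.exp (-(2 * m ^ 2 * (t - 2))))
            * Real.exp (-(4 * m ^ 2)) := by
      rw [hsplit]; field_simp
    rw [keyeq]
    calc (4 * m ^ 2 / t) * (t ^ 2 * Real.exp (-(2 * m ^ 2 * (t - 2))))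
            * Real.exp (-(4 * m ^ 2))
        ≤ (4 * m ^ 2 / t) * 4 * Real.exp (-(4 * m ^ 2)) := by
          apply mul_le_mul_of_nonneg_right _ (Real.exp_nonneg _)
          apply mul_le_mul_of_nonneg_left hb (by positivity)
      _ = 16 / t * (m ^ 2 * Real.exp (-(4 * m ^ 2))) := by ring
  -- L2 : m² exp(-4m²) ≤ exp(-4) * exp(-6)^n
  have hL2 : m ^ 2 * Real.exp (-(4 * m ^ 2)) ≤ Real.exp (-4) * Real.exp (-6) ^ n := by
    have hme : m ≤ Real.exp (n : ℝ) := by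
      have := Real.add_one_le_exp (n : ℝ); simpa [hmdef] using this
    have hm2 : m ^ 2 ≤ Real.exp (2 * (n : ℝ)) := by
      have : Real.exp (2 * (n : ℝ)) = Real.exp (n : ℝ) ^ 2 := by
        rw [sq, ← Real.exp_add]; ring_nf
      nlinarith [Real.exp_pos (n : ℝ)]
    have hexp : Real.exp (-(4 * m ^ 2)) ≤ Real.exp (-(8 * (n : ℝ) + 4)) := by
      apply Real.exp_le_exp.mpr
      simp only [hmdef]
      nlinarith [sq_nonneg (n : ℝ)]
    calc m ^ 2 * Real.exp (-(4 * m ^ 2))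
        ≤ Real.exp (2 * (n : ℝ)) * Real.exp (-(8 * (n : ℝ) + 4)) :=
          mul_le_mul hm2 hexp (Real.exp_nonneg _) (Real.exp_nonneg _)
      _ = Real.exp (-4) * Real.exp ((n : ℝ) * (-6)) := by
          rw [← Real.exp_add, ← Real.exp_add]; ring_nf
      _ = Real.exp (-4) * Real.exp (-6) ^ n := by
          rw [Real.exp_nat_mul]
  calc (4 * m ^ 2 * t - 1) * Real.exp (-(2 * m ^ 2 * t))
      ≤ 4 * m ^ 2 * t * Real.exp (-(2 * m ^ 2 * t)) := h1
    _ ≤ 16 / t * (m ^ 2 * Real.exp (-(4 * m ^ 2))) := h2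
    _ ≤ 16 / t * (Real.exp (-4) * Real.exp (-6) ^ n) := by
        apply mul_le_mul_of_nonneg_left hL2 (by positivity)

/-- For every real `x ≥ √2`, `F₃(x) ≥ exp(−1/x²)`. -/
theorem stmt_4 (x : ℝ) (hx : Real.sqrt 2 ≤ x) :
    Real.exp (-(1 / x ^ 2)) ≤ F₃ x := by
  have hs2 : (0:ℝ) ≤ Real.sqrt 2 := Real.sqrt_nonneg 2
  have hsq : Real.sqrt 2 ^ 2 = 2 := Real.sq_sqrt (by norm_num)
  have ht : 2 ≤ x ^ 2 := by nlinarith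
  set t : ℝ := x ^ 2 with htdef
  have htpos : (0:ℝ) < t := by linarith
  set f : ℕ → ℝ := fun n => (4 * ((n : ℝ) + 1) ^ 2 * t - 1) *
      Real.exp (-(2 * ((n : ℝ) + 1) ^ 2 * t)) with hfdef
  set g : ℕ → ℝ := fun n => 16 / t * (Real.exp (-4) * Real.exp (-6) ^ n) with hgdef
  have hfg : ∀ n, f n ≤ g n := fun n => term_bound t ht n
  have hfnn : ∀ n, 0 ≤ f n := by
    intro n
    apply mul_nonneg _ (Real.exp_nonneg _)
    have hn0 : (0:ℝ) ≤ (n : ℝ) := Nat.cast_nonneg n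
    nlinarith
  have hr0 : (0:ℝ) ≤ Real.exp (-6) := Real.exp_nonneg _
  have hr1 : Real.exp (-6) < 1 := by
    rw [Real.exp_lt_one_iff]; norm_num
  have hgeo : Summable (fun n : ℕ => Real.exp (-6) ^ n) :=
    summable_geometric_of_lt_one hr0 hr1
  have hg : Summable g := by
    simpa [hgdef, mul_assoc] using ((hgeo.mul_left (Real.exp (-4))).mul_left (16 / t))
  have hf : Summable f := Summable.of_nonneg_of_le hfnn hfg hg
  have htsum : ∑' n, f n ≤ ∑' n, g n := Summable.tsum_le_tsum hfg hf hg
  have hgs : ∑' n, g n = 16 / t * (Real.exp (-4) * (1 - Real.exp (-6))⁻¹) := by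
    simp only [hgdef]
    rw [tsum_mul_left, tsum_mul_left, tsum_geometric_of_lt_one hr0 hr1]
  -- numeric bound: 48 exp(-4) ≤ 1 - exp(-6)
  have hnum : 48 * Real.exp (-4) ≤ 1 - Real.exp (-6) := by
    have he1 : (2.7182818283:ℝ) < Real.exp 1 := Real.exp_one_gt_d9
    have he4 : Real.exp 4 = Real.exp 1 ^ 4 := by
      rw [← Real.exp_nat_mul]; norm_num
    have h27 : (2.7:ℝ) ≤ Real.exp 1 := by linarith
    have hp4 : (2.7:ℝ) ^ 4 ≤ Real.exp 1 ^ 4 := pow_le_pow_left₀ (by norm_num) h27 4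
    have h53 : (53:ℝ) ≤ Real.exp 4 := by rw [he4]; nlinarith
    have hexp4 : Real.exp (-4) = (Real.exp 4)⁻¹ := Real.exp_neg 4
    have h4pos : (0:ℝ) < Real.exp 4 := Real.exp_pos 4
    have hi : Real.exp (-4) ≤ 1 / 53 := by
      rw [hexp4]
      rw [inv_le_comm₀ (by positivity) (by norm_num)]
      simpa using h53
    have h64 : Real.exp (-6) ≤ Real.exp (-4) := by
      apply Real.exp_le_exp.mpr; norm_num
    linarith
  -- main tsum bound : 2 * ∑' f ≤ 1/(t+1)
  have hmain : 2 * ∑' n, f n ≤ 1 / (t + 1) := by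
    have hgsb : ∑' n, g n ≤ 16 / t * (Real.exp (-4) * (48 * Real.exp (-4))⁻¹) := by
      rw [hgs]
      apply mul_le_mul_of_nonneg_left _ (by positivity)
      apply mul_le_mul_of_nonneg_left _ (Real.exp_nonneg _)
      apply inv_anti₀ (by positivity) hnum
    have hsimp : 16 / t * (Real.exp (-4) * (48 * Real.exp (-4))⁻¹) = 1 / (3 * t) := by
      have := Real.exp_pos (-4)
      field_simp
      ring
    have h3t : 1 / (3 * t) ≤ 1 / (2 * (t + 1)) := by
      rw [div_le_div_iff₀ (by positivity) (by positivity)]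
      linarith
    have h2e : 1 / (2 * (t + 1)) = 1 / (t + 1) / 2 := by
      rw [div_div, mul_comm]
    have := htsum.trans (hgsb.trans_eq hsimp)
    have := this.trans (h3t.trans_eq h2e)
    linarith
  -- 1/(t+1) ≤ 1 - exp(-1/t)
  have hlhs : Real.exp (-(1 / t)) ≤ 1 - 1 / (t + 1) := by
    have h1t : 1 / t + 1 ≤ Real.exp (1 / t) := Real.add_one_le_exp (1 / t)
    have hep : (0:ℝ) < Real.exp (1 / t) := Real.exp_pos _
    have : Real.exp (-(1 / t)) = (Real.exp (1 / t))⁻¹ := Real.exp_neg _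
    rw [this]
    have hi : (Real.exp (1 / t))⁻¹ ≤ (1 / t + 1)⁻¹ := by
      apply inv_anti₀ (by positivity) h1t
    have ht0 : t ≠ 0 := ne_of_gt htpos
    have ht10 : t + 1 ≠ 0 := by positivity
    have heq : (1 / t + 1)⁻¹ = 1 - 1 / (t + 1) := by
      rw [div_add' _ _ _ ht0]
      rw [inv_div]
      rw [div_eq_iff (by positivity : (1:ℝ) + 1 * t ≠ 0)]
      field_simp
      ring
    linarith [hi.trans_eq heq]
  show Real.exp (-(1 / t)) ≤ F₃ x
  have hF : F₃ x = 1 - 2 * ∑' n, f n := by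
    rw [F₃, hfdef, htdef]
  rw [hF]
  linarith
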